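/- Let x ∈ Lip(□^d, ℝ^n), let σ ∈ Σ_d, and define the rotated map x_σ(s) := x(s_{σ(1)},…,s_{σ(d)}). For π = (π_1,…,π_d) ∈ Σ_m^d set π_σ := (π_{σ(1)},…,π_{σ(d)}). Then for every m ≥ 1 and level-m index (P,π): Φ_m^{P,π}(x_σ) = sign(σ)^m · Φ_m^{P,π_σ}(x), where sign(σ) ∈ {±1} is the sign of σ. -/

import Mathlib

open MeasureTheory

open scoped Classical

noncomputable section

/-- The unit cube `[0,1]^d` as a subset of `Fin d → ℝ`. -/
def unitCube (d : ℕ) : Set (Fin d → ℝ) := Set.Icc 0 1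

/-- Lipschitz condition with constant `L`, with respect to Euclidean norms. -/
def EuclidLip {d n : ℕ} (L : ℝ) (x : (Fin d → ℝ) → Fin n → ℝ) : Prop :=
  ∀ s t : Fin d → ℝ,
    Real.sqrt (∑ k, (x s k - x t k) ^ 2) ≤ L * Real.sqrt (∑ j, (s j - t j) ^ 2)

/-- Lipschitz map. -/
def IsLipMap {d n : ℕ} (x : (Fin d → ℝ) → Fin n → ℝ) : Prop :=
  ∃ L : ℝ, EuclidLip L x

/-- The Jacobian minor `J[x_P](s)`: the determinant of the `d × d` matrix
with `(i,j)` entry `∂ x_{P i} / ∂ s_j (s)`. -/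
def jacobianMinor {d n : ℕ} (x : (Fin d → ℝ) → Fin n → ℝ) (P : Fin d → Fin n)
    (s : Fin d → ℝ) : ℝ :=
  (Matrix.of fun i j : Fin d => fderiv ℝ (fun t => x t (P i)) s (Pi.single j 1)).det

/-- The permuted `m`-simplex `Δ^m_π(a,b)`. -/
def permSimplex {m : ℕ} (π : Equiv.Perm (Fin m)) (a b : ℝ) : Set (Fin m → ℝ) :=
  {u | (∀ i, u i ∈ Set.Icc a b) ∧ StrictMono fun i => u (π i)}

/-- The integration domain `D^{m,d}_π(a,b) = Δ^m_{π 1}(a₁,b₁) × ⋯ × Δ^m_{π d}(a_d,b_d)`. -/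
def intDomain {m d : ℕ} (π : Fin d → Equiv.Perm (Fin m)) (a b : Fin d → ℝ) :
    Set (Fin m → Fin d → ℝ) :=
  {t | ∀ j, (fun i => t i j) ∈ permSimplex (π j) (a j) (b j)}

/-- The restricted mapping space monomial `Φ_m^{P,π}(x)_{a,b}`. -/
def msMonomialOn {d n m : ℕ} (x : (Fin d → ℝ) → Fin n → ℝ)
    (P : Fin m → Fin d → Fin n) (π : Fin d → Equiv.Perm (Fin m))
    (a b : Fin d → ℝ) : ℝ :=
  ∫ t in intDomain π a b, ∏ i, jacobianMinor x (P i) (t i)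

/-- The mapping space monomial `Φ_m^{P,π}(x)`. -/
def msMonomial {d n m : ℕ} (x : (Fin d → ℝ) → Fin n → ℝ)
    (P : Fin m → Fin d → Fin n) (π : Fin d → Equiv.Perm (Fin m)) : ℝ :=
  msMonomialOn x P π (fun _ => 0) (fun _ => 1)

/-- The rotation `s ↦ s ∘ σ` as a continuous linear equivalence. -/
def rotCLE {d : ℕ} (σ : Equiv.Perm (Fin d)) : (Fin d → ℝ) ≃L[ℝ] (Fin d → ℝ) :=
  (LinearEquiv.funCongrLeft ℝ ℝ σ).toContinuousLinearEquiv

lemma rotCLE_apply {d : ℕ} (σ : Equiv.Perm (Fin d)) (s : Fin d → ℝ) :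
    rotCLE σ s = fun j => s (σ j) := rfl

lemma rotCLE_single {d : ℕ} (σ : Equiv.Perm (Fin d)) (j : Fin d) :
    rotCLE σ (Pi.single j (1 : ℝ)) = Pi.single (σ⁻¹ j) (1 : ℝ) := by
  ext k
  simp only [rotCLE_apply, Pi.single_apply]
  by_cases h : σ k = j
  · simp [h, (by simp [← h] : k = σ⁻¹ j)]
  · have h2 : ¬ k = σ⁻¹ j := by
      intro hk; apply h; rw [hk]; simp
    simpa [h] using h2

lemma jac_rot {d n : ℕ} (x : (Fin d → ℝ) → Fin n → ℝ) (P : Fin d → Fin n)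
    (σ : Equiv.Perm (Fin d)) (s : Fin d → ℝ) :
    jacobianMinor (fun s => x (fun j => s (σ j))) P s =
      ((Equiv.Perm.sign σ : ℤ) : ℝ) * jacobianMinor x P (fun j => s (σ j)) := by
  unfold jacobianMinor
  have hf : ∀ i : Fin d,
      fderiv ℝ (fun t => x (fun j => t (σ j)) (P i)) s =
        (fderiv ℝ (fun t => x t (P i)) (rotCLE σ s)).comp
          (rotCLE σ : (Fin d → ℝ) →L[ℝ] (Fin d → ℝ)) := by
    intro i
    have := (rotCLE σ).comp_right_fderiv (f := fun t => x t (P i)) (x := s)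
    simpa [Function.comp_def, rotCLE_apply] using this
  have hM : (Matrix.of fun i j : Fin d =>
        fderiv ℝ (fun t => x (fun j' => t (σ j')) (P i)) s (Pi.single j 1)) =
      (Matrix.of fun i j : Fin d =>
        fderiv ℝ (fun t => x t (P i)) (rotCLE σ s) (Pi.single j 1)).submatrix id ⇑(σ⁻¹) := by
    ext i j
    simp only [Matrix.of_apply, Matrix.submatrix_apply, id_eq, hf i,
      ContinuousLinearMap.comp_apply, ContinuousLinearEquiv.coe_coe, rotCLE_single]
  rw [hM, Matrix.det_permute' σ⁻¹]
  have hs : (rotCLE σ s) = fun j => s (σ j) := rfl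
  rw [hs]
  simp

/-- rotation equivariance
`Φ_m^{P,π}(x_σ) = sign(σ)^m Φ_m^{P,π_σ}(x)`. -/
theorem stmt14 (d n m : ℕ) (hd : 1 ≤ d) (hn : d ≤ n) (hm : 1 ≤ m)
    (x : (Fin d → ℝ) → Fin n → ℝ) (hx : IsLipMap x) (σ : Equiv.Perm (Fin d))
    (P : Fin m → Fin d → Fin n) (hP : ∀ i, StrictMono (P i))
    (π : Fin d → Equiv.Perm (Fin m)) :
    msMonomial (fun s => x (fun j => s (σ j))) P π =
      ((Equiv.Perm.sign σ : ℤ) : ℝ) ^ m * msMonomial x P (fun j => π (σ j)) := by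
  classical
  set c : ℝ := ((Equiv.Perm.sign σ : ℤ) : ℝ) with hc
  -- the rotation map on the big product space
  set T : (Fin m → Fin d → ℝ) → (Fin m → Fin d → ℝ) :=
    fun t i j => t i (σ j) with hT
  -- inner rotation is measure preserving
  have hinner : MeasurePreserving (fun (s : Fin d → ℝ) => fun j => s (σ j))
      volume volume := by
    have := MeasureTheory.volume_measurePreserving_piCongrLeft (fun _ : Fin d => ℝ) σ.symm
    convert this using 1
    ext s j
    simp [MeasurableEquiv.piCongrLeft, Equiv.piCongrLeft_apply_apply, Equiv.piCongrLeft_apply_eq_cast]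
  have hTmp : MeasurePreserving T volume volume := by
    have := MeasureTheory.measurePreserving_pi
      (fun _ : Fin m => (volume : Measure (Fin d → ℝ)))
      (fun _ : Fin m => (volume : Measure (Fin d → ℝ)))
      (f := fun _ : Fin m => fun (s : Fin d → ℝ) => fun j => s (σ j))
      (fun _ => hinner)
    exact this
  -- T is a measurable embedding
  have hTemb : MeasurableEmbedding T := by
    have : T = (MeasurableEquiv.piCongrRight
        (fun _ : Fin m => MeasurableEquiv.piCongrLeft (fun _ : Fin d => ℝ) σ.symm)) := by
      ext t i j
      simp [hT, MeasurableEquiv.piCongrRight, MeasurableEquiv.piCongrLeft,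
        Equiv.piCongrRight, Equiv.piCongrLeft_apply_apply, Equiv.piCongrLeft_apply_eq_cast]
    rw [this]
    exact (MeasurableEquiv.piCongrRight _).measurableEmbedding
  -- domain identity
  have hdom : T ⁻¹' intDomain (fun j => π (σ j)) (fun _ => (0:ℝ)) (fun _ => (1:ℝ)) =
      intDomain π (fun _ => (0:ℝ)) (fun _ => (1:ℝ)) := by
    ext t
    constructor
    · intro h j
      have := h (σ⁻¹ j)
      simpa [hT, Equiv.Perm.inv_def] using this
    · intro h j
      exact h (σ j)
  -- pointwise integrand identity
  have hpt : ∀ t : Fin m → Fin d → ℝ,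
      (∏ i, jacobianMinor (fun s => x (fun j => s (σ j))) (P i) (t i)) =
        c ^ m * ∏ i, jacobianMinor x (P i) (T t i) := by
    intro t
    have : ∀ i, jacobianMinor (fun s => x (fun j => s (σ j))) (P i) (t i) =
        c * jacobianMinor x (P i) (T t i) := fun i => jac_rot x (P i) σ (t i)
    rw [Finset.prod_congr rfl (fun i _ => this i), Finset.prod_mul_distrib]
    simp
  unfold msMonomial msMonomialOn
  calc ∫ t in intDomain π (fun _ => (0:ℝ)) (fun _ => (1:ℝ)),
        ∏ i, jacobianMinor (fun s => x (fun j => s (σ j))) (P i) (t i)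
      = ∫ t in intDomain π (fun _ => (0:ℝ)) (fun _ => (1:ℝ)),
          c ^ m * ∏ i, jacobianMinor x (P i) (T t i) := by
        have : (fun t => ∏ i, jacobianMinor (fun s => x (fun j => s (σ j))) (P i) (t i)) =
            fun t => c ^ m * ∏ i, jacobianMinor x (P i) (T t i) := funext hpt
        rw [this]
    _ = c ^ m * ∫ t in intDomain π (fun _ => (0:ℝ)) (fun _ => (1:ℝ)),
          ∏ i, jacobianMinor x (P i) (T t i) := MeasureTheory.integral_const_mul _ _
    _ = c ^ m * ∫ u in intDomain (fun j => π (σ j)) (fun _ => (0:ℝ)) (fun _ => (1:ℝ)),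
          ∏ i, jacobianMinor x (P i) (u i) := by
        rw [← hdom]
        congr 1
        exact hTmp.setIntegral_preimage_emb hTemb (fun u => ∏ i, jacobianMinor x (P i) (u i)) _

end
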